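/- Suppose κ₁ ≥ ... ≥ κₙ and σₘ(κ) > 0, ..., σ₁(κ) > 0 through order m (κ ∈ Γₘ⁺). Then κ₁ ≥ ... ≥ κₘ > 0 and σₘ(κ) ≤ binom(n,m)·κ₁κ₂···κₘ. -/
import Mathlib

open Finset

/-- The m-th elementary symmetric polynomial of κ : Fin n → ℝ. -/
noncomputable def esymm (n m : ℕ) (κ : Fin n → ℝ) : ℝ :=
  ∑ s ∈ Finset.powersetCard m (Finset.univ : Finset (Fin n)), ∏ i ∈ s, κ i

lemma esymm_eq_multiset (n m : ℕ) (κ : Fin n → ℝ) :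
    esymm n m κ = ((Finset.univ : Finset (Fin n)).val.map κ).esymm m :=
  (Finset.esymm_map_val κ univ m).symm

lemma multiset_esymm_cons (a : ℝ) (s : Multiset ℝ) (j : ℕ) :
    (a ::ₘ s).esymm (j+1) = s.esymm (j+1) + a * s.esymm j := by
  rw [Multiset.esymm, Multiset.powersetCard_cons, Multiset.map_add, Multiset.sum_add,
    Multiset.esymm, Multiset.esymm, Multiset.map_map]
  congr 1
  rw [← Multiset.sum_map_mul_left]
  apply congrArg
  apply Multiset.map_congr rfl
  intro t ht
  simp

lemma univ_val_map_succ (n : ℕ) (κ : Fin (n+1) → ℝ) :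
    (Finset.univ : Finset (Fin (n+1))).val.map κ
      = κ (Fin.last n) ::ₘ (Finset.univ : Finset (Fin n)).val.map (κ ∘ Fin.castSucc) := by
  rw [Fin.univ_succAbove n (Fin.last n), Finset.cons_val, Multiset.map_cons, Finset.map_val,
    Multiset.map_map]
  congr 1
  apply Multiset.map_congr rfl
  intro x _
  simp [Fin.succAbove_last]

lemma esymm_rec (n j : ℕ) (κ : Fin (n+1) → ℝ) :
    esymm (n+1) (j+1) κ
      = esymm n (j+1) (κ ∘ Fin.castSucc) + κ (Fin.last n) * esymm n j (κ ∘ Fin.castSucc) := by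
  rw [esymm_eq_multiset, esymm_eq_multiset, esymm_eq_multiset, univ_val_map_succ,
    multiset_esymm_cons]

lemma esymm_zero'' (n : ℕ) (κ : Fin n → ℝ) : esymm n 0 κ = 1 := by simp [esymm]

lemma esymm_of_gt (n j : ℕ) (h : n < j) (κ : Fin n → ℝ) : esymm n j κ = 0 := by
  rw [esymm, Finset.powersetCard_eq_empty.2 (by simpa using h), Finset.sum_empty]

lemma fin_le_apply {m n : ℕ} (f : Fin m → Fin n) (hf : StrictMono f) (i : Fin m) :
    (i : ℕ) ≤ (f i : ℕ) := by
  obtain ⟨iv, hiv⟩ := i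
  induction iv with
  | zero => exact Nat.zero_le _
  | succ k ih =>
    have hk' : k < m := by omega
    have h2 : f ⟨k, hk'⟩ < f ⟨k+1, hiv⟩ := hf (by simp [Fin.lt_def])
    have h3 := ih hk'
    have h4 := Fin.lt_def.mp h2
    simp only [Fin.val_mk] at h3 h4 ⊢
    omega

lemma prod_subset_le {n m : ℕ} (hmn : m ≤ n) (κ : Fin n → ℝ)
    (hsort : ∀ i j : Fin n, i ≤ j → κ j ≤ κ i) (hpos : ∀ i, 0 ≤ κ i)
    (s : Finset (Fin n)) (hs : s.card = m) :
    ∏ i ∈ s, κ i ≤ ∏ i : Fin m, κ (Fin.castLE hmn i) := by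
  have hmap : (Finset.univ : Finset (Fin m)).map (s.orderEmbOfFin hs).toEmbedding = s := by
    apply Finset.eq_of_subset_of_card_le
    · intro x hx
      simp only [Finset.mem_map] at hx
      obtain ⟨k, -, rfl⟩ := hx
      exact Finset.orderEmbOfFin_mem s hs k
    · simp [hs]
  calc ∏ i ∈ s, κ i = ∏ k : Fin m, κ (s.orderEmbOfFin hs k) := by
        conv_lhs => rw [← hmap]
        rw [Finset.prod_map]; rfl
    _ ≤ ∏ i : Fin m, κ (Fin.castLE hmn i) := by
        apply Finset.prod_le_prod
        · intro k _; exact hpos _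
        · intro k _
          apply hsort
          rw [Fin.le_def]
          exact fin_le_apply _ (s.orderEmbOfFin hs).strictMono k

theorem main_aux (n : ℕ) : ∀ m : ℕ, 1 ≤ m → ∀ (hmn : m ≤ n) (κ : Fin n → ℝ),
    (∀ i j : Fin n, i ≤ j → κ j ≤ κ i) →
    (∀ j, 1 ≤ j → j ≤ m → 0 < esymm n j κ) →
    (∀ i : Fin n, (i : ℕ) < m → 0 < κ i) ∧
      esymm n m κ ≤ (n.choose m : ℝ) * ∏ i : Fin m, κ (Fin.castLE hmn i) := by
  induction n with
  | zero => intro m hm hmn; omega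
  | succ n IH =>
    intro m hm hmn κ hsort hΓ
    by_cases hlast : 0 ≤ κ (Fin.last n)
    · have hnn : ∀ i, 0 ≤ κ i := fun i => le_trans hlast (hsort i (Fin.last n) (Fin.le_last i))
      have hpos : ∀ i : Fin (n+1), (i : ℕ) < m → 0 < κ i := by
        by_contra hcon
        push_neg at hcon
        obtain ⟨i0, hi0m, hi0⟩ := hcon
        have hzero : ∀ j : Fin (n+1), m - 1 ≤ (j : ℕ) → κ j = 0 := by
          intro j hj
          have h1 : i0 ≤ j := by rw [Fin.le_def]; omega
          exact le_antisymm (le_trans (hsort i0 j h1) hi0) (hnn j)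
        have hz : esymm (n+1) m κ = 0 := by
          rw [esymm]
          apply Finset.sum_eq_zero
          intro s hs
          rw [Finset.mem_powersetCard] at hs
          have hex : ∃ j ∈ s, m - 1 ≤ (j : ℕ) := by
            by_contra hA
            push_neg at hA
            have hcard : s.card ≤ (Finset.range (m-1)).card :=
              Finset.card_le_card_of_injOn (fun j => (j : ℕ))
                (fun j hj => by simpa using hA j hj)
                (fun a _ b _ hab => Fin.ext hab)
            rw [Finset.card_range, hs.2] at hcard
            omega
          obtain ⟨j, hjs, hjm⟩ := hex
          exact Finset.prod_eq_zero hjs (hzero j hjm)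
        have hc := hΓ m hm le_rfl
        rw [hz] at hc
        exact lt_irrefl _ hc
      refine ⟨hpos, ?_⟩
      rw [esymm]
      have hB : ∀ s ∈ Finset.powersetCard m (univ : Finset (Fin (n+1))),
          ∏ i ∈ s, κ i ≤ ∏ i : Fin m, κ (Fin.castLE hmn i) := by
        intro s hs
        rw [Finset.mem_powersetCard] at hs
        exact prod_subset_le hmn κ hsort hnn s hs.2
      calc ∑ s ∈ Finset.powersetCard m (univ : Finset (Fin (n+1))), ∏ i ∈ s, κ i
          ≤ (Finset.powersetCard m (univ : Finset (Fin (n+1)))).card •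
              (∏ i : Fin m, κ (Fin.castLE hmn i)) := Finset.sum_le_card_nsmul _ _ _ hB
        _ = ((n+1).choose m : ℝ) * ∏ i : Fin m, κ (Fin.castLE hmn i) := by
            rw [Finset.card_powersetCard, Finset.card_univ, Fintype.card_fin, nsmul_eq_mul]
    · push_neg at hlast
      have hsortμ : ∀ i j : Fin n, i ≤ j → (κ ∘ Fin.castSucc) j ≤ (κ ∘ Fin.castSucc) i := by
        intro i j hij
        exact hsort _ _ (by rwa [Fin.castSucc_le_castSucc_iff])
      have hΓμ : ∀ j, j ≤ m → 0 < esymm n j (κ ∘ Fin.castSucc) := by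
        intro j
        induction j with
        | zero => intro _; rw [esymm_zero'']; norm_num
        | succ j ihj =>
          intro hjm
          have h1 := ihj (by omega)
          have h2 := hΓ (j+1) (by omega) hjm
          rw [esymm_rec] at h2
          have h3 : κ (Fin.last n) * esymm n j (κ ∘ Fin.castSucc) < 0 :=
            mul_neg_of_neg_of_pos hlast h1
          linarith
      have hmn' : m ≤ n := by
        by_contra hc
        have hm' : m = n + 1 := by omega
        subst hm'
        have h2 := hΓ (n+1) (by omega) le_rfl
        rw [esymm_rec] at h2
        have h0 : esymm n (n+1) (κ ∘ Fin.castSucc) = 0 := esymm_of_gt n (n+1) (by omega) _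
        have h1 := hΓμ n (by omega)
        have h3 : κ (Fin.last n) * esymm n n (κ ∘ Fin.castSucc) < 0 :=
          mul_neg_of_neg_of_pos hlast h1
        rw [h0] at h2
        linarith
      obtain ⟨hposμ, hboundμ⟩ := IH m hm hmn' (κ ∘ Fin.castSucc) hsortμ (fun j h1 h2 => hΓμ j h2)
      have hposκ : ∀ i : Fin (n+1), (i : ℕ) < m → 0 < κ i := by
        intro i him
        have hin : (i : ℕ) < n := by omega
        have he : Fin.castSucc (⟨(i : ℕ), hin⟩ : Fin n) = i := Fin.ext rfl
        have := hposμ ⟨(i : ℕ), hin⟩ him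
        simp [he] at this; exact this
      refine ⟨hposκ, ?_⟩
      obtain ⟨m', rfl⟩ : ∃ m', m = m' + 1 := ⟨m - 1, by omega⟩
      have hrec := esymm_rec n m' κ
      have h3 : κ (Fin.last n) * esymm n m' (κ ∘ Fin.castSucc) < 0 :=
        mul_neg_of_neg_of_pos hlast (hΓμ m' (by omega))
      have hprodeq : (∏ i : Fin (m'+1), (κ ∘ Fin.castSucc) (Fin.castLE hmn' i))
          = ∏ i : Fin (m'+1), κ (Fin.castLE hmn i) := by
        apply Finset.prod_congr rfl
        intro i _
        have he : Fin.castSucc (Fin.castLE hmn' i) = Fin.castLE hmn i := Fin.ext rfl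
        simp [Function.comp, he]
      have hprodpos : 0 ≤ ∏ i : Fin (m'+1), κ (Fin.castLE hmn i) := by
        apply Finset.prod_nonneg
        intro i _
        exact le_of_lt (hposκ _ (by simpa using i.isLt))
      have hchoose : (n.choose (m'+1) : ℝ) ≤ ((n+1).choose (m'+1) : ℝ) := by
        exact_mod_cast Nat.choose_le_choose _ (Nat.le_succ n)
      calc esymm (n+1) (m'+1) κ
          = esymm n (m'+1) (κ ∘ Fin.castSucc)
            + κ (Fin.last n) * esymm n m' (κ ∘ Fin.castSucc) := hrec
        _ ≤ esymm n (m'+1) (κ ∘ Fin.castSucc) := by linarith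
        _ ≤ (n.choose (m'+1) : ℝ)
            * ∏ i : Fin (m'+1), (κ ∘ Fin.castSucc) (Fin.castLE hmn' i) := hboundμ
        _ = (n.choose (m'+1) : ℝ) * ∏ i : Fin (m'+1), κ (Fin.castLE hmn i) := by rw [hprodeq]
        _ ≤ ((n+1).choose (m'+1) : ℝ) * ∏ i : Fin (m'+1), κ (Fin.castLE hmn i) :=
            mul_le_mul_of_nonneg_right hchoose hprodpos

theorem stmt12 (n m : ℕ) (hm : 1 ≤ m) (hmn : m ≤ n) (κ : Fin n → ℝ)
    (hsort : ∀ i j : Fin n, i ≤ j → κ j ≤ κ i)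
    (hΓ : ∀ j, 1 ≤ j → j ≤ m → 0 < esymm n j κ) :
    (∀ i : Fin n, (i : ℕ) < m → 0 < κ i) ∧
      esymm n m κ ≤ (n.choose m : ℝ) * ∏ i : Fin m, κ (Fin.castLE hmn i) := by
  exact main_aux n m hm hmn κ hsort hΓ
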